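/- arXiv:2111.05267 — 4 statements merged into one kernel-verified Lean document; each statement's English description precedes it below -/
import Mathlib

section
/- Let X be a K×K matrix with strictly positive entries such that rank(X) = K. Let loḡ(X) denote the matrix obtained by applying the natural logarithm entrywise. Then, for Lebesgue-almost every such X, rank(loḡ(X)) = K. Equivalently, the set of full-rank positive matrices X for which loḡ(X) has rank less than K has Lebesgue measure zero. -/
open MeasureTheory MvPolynomial

/-- The zero set of a nonzero multivariate polynomial over `Fin n` is Lebesgue-null. -/
lemma aux_null_fin : ∀ (n : ℕ) (p : MvPolynomial (Fin n) ℝ), p ≠ 0 →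
    volume {x : Fin n → ℝ | eval x p = 0} = 0 := by
  intro n
  induction n with
  | zero =>
    intro p hp
    have : {x : Fin 0 → ℝ | eval x p = 0} = ∅ := by
      ext x
      simp only [Set.mem_setOf_eq, Set.mem_empty_iff_false, iff_false]
      intro hx
      apply hp
      apply MvPolynomial.funext
      intro y
      rw [Subsingleton.elim y x, hx, map_zero]
    rw [this, measure_empty]
  | succ n ih =>
    intro p hp
    -- q : polynomial in the first variable with MvPolynomial coefficients
    set q : Polynomial (MvPolynomial (Fin n) ℝ) := finSuccEquiv ℝ n p with hq
    have hq0 : q ≠ 0 := by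
      simpa [hq] using (AlgEquiv.injective (finSuccEquiv ℝ n)).ne_iff' (map_zero _) |>.mpr hp
    obtain ⟨m, hm⟩ : ∃ m, q.coeff m ≠ 0 := by
      by_contra h
      push_neg at h
      exact hq0 (Polynomial.ext fun m => h m)
    -- transfer to the product space (Fin n → ℝ) × ℝ
    let e := (MeasurableEquiv.piFinSuccAbove (fun _ : Fin (n + 1) => ℝ) 0).trans
      MeasurableEquiv.prodComm
    have he : MeasurePreserving e volume ((volume : Measure (Fin n → ℝ)).prod volume) :=
      Measure.measurePreserving_swap.comp
        (measurePreserving_piFinSuccAbove (fun _ : Fin (n + 1) => volume) 0)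
    set W : Set ((Fin n → ℝ) × ℝ) := {yt | eval (Fin.cons yt.2 yt.1) p = 0} with hW
    have hWmeas : MeasurableSet W := by
      have hcons : Continuous fun yt : (Fin n → ℝ) × ℝ => (Fin.cons yt.2 yt.1 : Fin (n+1) → ℝ) := by
        refine continuous_pi fun i => ?_
        refine Fin.cases ?_ ?_ i
        · simpa using continuous_snd
        · intro j
          simp only [Fin.cons_succ]
          exact (continuous_apply j).comp continuous_fst
      have hc : Continuous fun yt : (Fin n → ℝ) × ℝ => eval (Fin.cons yt.2 yt.1) p :=
        (MvPolynomial.continuous_eval p).comp hcons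
      exact hc.measurable (MeasurableSet.singleton 0)
    have hZ : {x : Fin (n + 1) → ℝ | eval x p = 0} = e ⁻¹' W := by
      ext x
      have hcx : (Fin.cons (e x).2 (e x).1 : Fin (n+1) → ℝ) = x := by
        ext i
        refine Fin.cases rfl (fun j => ?_) i
        rw [Fin.cons_succ]
        show x (Fin.succAbove 0 j) = x j.succ
        rw [Fin.succAbove_zero]
      simp only [Set.mem_setOf_eq, Set.mem_preimage, hW]
      rw [hcx]
    rw [hZ, he.measure_preimage hWmeas.nullMeasurableSet]
    -- Fubini: a.e. section (in the last variable) is finite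
    rw [Measure.measure_prod_null hWmeas]
    have hN : volume {y : Fin n → ℝ | eval y (q.coeff m) = 0} = 0 := ih _ hm
    filter_upwards [compl_mem_ae_iff.mpr hN] with y hy
    have hqy : (q.map (eval y)) ≠ 0 := fun h => hy (by
      have := congrArg (fun r => Polynomial.coeff r m) h
      simpa [Polynomial.coeff_map] using this)
    have : (Prod.mk y ⁻¹' W) ⊆ {t | Polynomial.IsRoot (q.map (eval y)) t} := by
      intro t ht
      simp only [Set.mem_preimage, hW, Set.mem_setOf_eq] at ht
      show Polynomial.eval t (q.map (eval y)) = 0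
      rw [hq, ← eval_eq_eval_mv_eval']
      exact ht
    exact measure_mono_null this ((Polynomial.finite_setOf_isRoot hqy).measure_zero _)

/-- The zero set of a nonzero multivariate polynomial over any finite index type is null. -/
lemma aux_null {σ : Type*} [Fintype σ] (p : MvPolynomial σ ℝ) (hp : p ≠ 0) :
    volume {x : σ → ℝ | eval x p = 0} = 0 := by
  classical
  let e : σ ≃ Fin (Fintype.card σ) := Fintype.equivFin σ
  set q : MvPolynomial (Fin (Fintype.card σ)) ℝ := rename e p with hq
  have hq0 : q ≠ 0 := fun h => hp ((rename_injective (⇑e) e.injective)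
    (by rw [← hq, h, map_zero]))
  have hmp : MeasurePreserving (MeasurableEquiv.piCongrLeft (fun _ : Fin (Fintype.card σ) => ℝ) e)
      volume volume := volume_measurePreserving_piCongrLeft _ e
  have hZ : {x : σ → ℝ | eval x p = 0} =
      (MeasurableEquiv.piCongrLeft (fun _ : Fin (Fintype.card σ) => ℝ) e) ⁻¹'
        {y : Fin (Fintype.card σ) → ℝ | eval y q = 0} := by
    ext x
    have key : (⇑(MeasurableEquiv.piCongrLeft (fun _ : Fin (Fintype.card σ) => ℝ) e) x) ∘ ⇑e
        = x := by
      funext a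
      exact Equiv.piCongrLeft_apply_apply (fun _ => ℝ) e x a
    simp only [Set.mem_setOf_eq, Set.mem_preimage, hq, eval_rename, key]
  rw [hZ, hmp.measure_preimage]
  · exact aux_null_fin _ q hq0
  · exact (((MvPolynomial.continuous_eval q).measurable)
      (MeasurableSet.singleton 0)).nullMeasurableSet

/-- Currying is measure preserving. -/
lemma aux_curry (K : ℕ) :
    MeasurePreserving (fun (Y : Fin K → Fin K → ℝ) (p : Fin K × Fin K) => Y p.1 p.2)
      volume volume := by
  classical
  constructor
  · exact measurable_pi_iff.mpr fun p => (measurable_pi_apply p.2).comp (measurable_pi_apply p.1)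
  · refine (Measure.pi_eq fun s hs => ?_).symm
    rw [Measure.map_apply
      (measurable_pi_iff.mpr fun p => (measurable_pi_apply p.2).comp (measurable_pi_apply p.1))
      (MeasurableSet.univ_pi hs)]
    have : (fun (Y : Fin K → Fin K → ℝ) (p : Fin K × Fin K) => Y p.1 p.2) ⁻¹'
        Set.univ.pi s = Set.univ.pi fun i => Set.univ.pi fun j => s (i, j) := by
      ext Y
      simp [Set.mem_pi, Prod.forall]
    rw [this, volume_pi_pi]
    simp_rw [volume_pi_pi]
    rw [Fintype.prod_prod_type]

/-- The set of singular matrices is null. -/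
lemma aux_det_null (K : ℕ) :
    volume {Y : Fin K → Fin K → ℝ | (Matrix.of Y).det = 0} = 0 := by
  classical
  set D : MvPolynomial (Fin K × Fin K) ℝ := (Matrix.mvPolynomialX (Fin K) (Fin K) ℝ).det with hD
  have hkey : ∀ Y : Fin K → Fin K → ℝ,
      eval (fun p : Fin K × Fin K => Y p.1 p.2) D = (Matrix.of Y).det := by
    intro Y
    rw [hD]
    exact (RingHom.map_det (eval fun p : Fin K × Fin K => Y p.1 p.2) _).trans
      (congrArg Matrix.det (Matrix.mvPolynomialX_mapMatrix_eval (Matrix.of Y)))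
  have hD0 : D ≠ 0 := Matrix.det_mvPolynomialX_ne_zero (Fin K) ℝ
  have hZ : {Y : Fin K → Fin K → ℝ | (Matrix.of Y).det = 0} =
      (fun (Y : Fin K → Fin K → ℝ) (p : Fin K × Fin K) => Y p.1 p.2) ⁻¹'
        {x : Fin K × Fin K → ℝ | eval x D = 0} := by
    ext Y
    simp only [Set.mem_setOf_eq, Set.mem_preimage, hkey Y]
  rw [hZ, (aux_curry K).measure_preimage]
  · exact aux_null D hD0
  · exact (((MvPolynomial.continuous_eval D).measurable)
      (MeasurableSet.singleton 0)).nullMeasurableSet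

/-- For Lebesgue-almost every positive full-rank `K × K` matrix `X`, the entrywise
logarithm of `X` also has full rank: the exceptional set has measure zero. -/
theorem stmt0 (K : ℕ) :
    volume {X : Fin K → Fin K → ℝ |
      (∀ i j, 0 < X i j) ∧ (Matrix.of X).rank = K ∧
        (Matrix.of fun i j => Real.log (X i j)).rank < K} = 0 := by
  set f : (Fin K → Fin K → ℝ) → (Fin K → Fin K → ℝ) :=
    fun Y i j => Real.exp (Y i j) with hf
  have hdiff : Differentiable ℝ f := by
    refine differentiable_pi.mpr fun i => differentiable_pi.mpr fun j => ?_
    exact Real.differentiable_exp.comp ((differentiable_apply (𝕜 := ℝ) (F' := fun _ : Fin K => ℝ) j).comp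
      (differentiable_apply (𝕜 := ℝ) (F' := fun _ : Fin K => Fin K → ℝ) i))
  have hsub : {X : Fin K → Fin K → ℝ |
      (∀ i j, 0 < X i j) ∧ (Matrix.of X).rank = K ∧
        (Matrix.of fun i j => Real.log (X i j)).rank < K} ⊆
      f '' {Y : Fin K → Fin K → ℝ | (Matrix.of Y).det = 0} := by
    rintro X ⟨hpos, -, hrank⟩
    refine ⟨fun i j => Real.log (X i j), ?_, ?_⟩
    · by_contra hd
      have hu : IsUnit (Matrix.of fun i j => Real.log (X i j)) :=
        (Matrix.isUnit_iff_isUnit_det _).mpr (isUnit_iff_ne_zero.mpr hd)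
      have := Matrix.rank_of_isUnit _ hu
      rw [Fintype.card_fin] at this
      rw [this] at hrank
      exact lt_irrefl _ hrank
    · funext i j
      exact Real.exp_log (hpos i j)
  refine measure_mono_null hsub ?_
  exact addHaar_image_eq_zero_of_differentiableOn_of_addHaar_eq_zero volume
    hdiff.differentiableOn (aux_det_null K)
end

section
/- Let ξ_e, e ∈ E, be independent Bernoulli random variables indexed by a finite set E with success probabilities π_e > 0. For a subset S ⊆ E define ξ_S := ∏_{e∈S} ξ_e. Let S_1,…,S_k be nonempty subsets of E, let n_e be the number of indices j with e ∈ S_j, let E₁ := {e ∈ ⋃_j S_j : n_e = 1} and E₂ := (⋃_j S_j) \ E₁. Then |E[∏_{j=1}^k (ξ_{S_j} − E ξ_{S_j})]| ≤ (∏_{e∈E₁} π_e)·(∏_{e∈E₂} π_e(1+π_e)). -/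
open MeasureTheory ProbabilityTheory

section Aux

variable {Ω : Type*} [MeasurableSpace Ω] {μ : Measure Ω} [IsProbabilityMeasure μ]
  {E : Type*} [Fintype E] [DecidableEq E] {ξ : E → Ω → ℝ}

lemma my_integrable_of_bounded {f : Ω → ℝ} (hm : Measurable f) (C : ℝ)
    (hb : ∀ ω, |f ω| ≤ C) : Integrable f μ :=
  Integrable.mono' (integrable_const C) hm.aestronglyMeasurable
    (Filter.Eventually.of_forall (fun ω => by simpa [Real.norm_eq_abs] using hb ω))

lemma my_prod01 (h01 : ∀ e ω, ξ e ω = 0 ∨ ξ e ω = 1) (F : Finset E) (ω : Ω) :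
    (∏ e ∈ F, ξ e ω) = 0 ∨ (∏ e ∈ F, ξ e ω) = 1 := by
  by_cases h : ∀ e ∈ F, ξ e ω = 1
  · exact Or.inr (Finset.prod_eq_one h)
  · push_neg at h
    obtain ⟨e, he, hne⟩ := h
    exact Or.inl (Finset.prod_eq_zero he ((h01 e ω).resolve_right hne))

lemma my_prod_union_idem (h01 : ∀ e ω, ξ e ω = 0 ∨ ξ e ω = 1) (A B : Finset E) (ω : Ω) :
    (∏ e ∈ A, ξ e ω) * ∏ e ∈ B, ξ e ω = ∏ e ∈ A ∪ B, ξ e ω := by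
  by_cases h : ∀ e ∈ A ∩ B, ξ e ω = 1
  · have h1 : (∏ e ∈ A ∩ B, ξ e ω) = 1 := Finset.prod_eq_one h
    have := Finset.prod_union_inter (s₁ := A) (s₂ := B) (f := fun e => ξ e ω)
    rw [h1, mul_one] at this
    exact this.symm
  · push_neg at h
    obtain ⟨e, he, hne⟩ := h
    have h0 : ξ e ω = 0 := (h01 e ω).resolve_right hne
    rw [Finset.prod_eq_zero (Finset.mem_inter.1 he).1 h0,
      Finset.prod_eq_zero (Finset.mem_union_left B (Finset.mem_inter.1 he).1) h0, zero_mul]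

lemma my_prod_biUnion_idem (h01 : ∀ e ω, ξ e ω = 0 ∨ ξ e ω = 1) {k : ℕ}
    (R : Fin k → Finset E) (T : Finset (Fin k)) (ω : Ω) :
    ∏ j ∈ T, ∏ e ∈ R j, ξ e ω = ∏ e ∈ T.biUnion R, ξ e ω := by
  induction T using Finset.induction_on with
  | empty => simp
  | insert _ _ h ih =>
    rw [Finset.prod_insert h, ih, my_prod_union_idem h01, Finset.biUnion_insert]

lemma my_integral_finset_prod {g : E → Ω → ℝ}
    (hind : iIndepFun g μ)
    (hmeas : ∀ e, Measurable (g e)) (F : Finset E) :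
    ∫ ω, ∏ e ∈ F, g e ω ∂μ = ∏ e ∈ F, ∫ ω, g e ω ∂μ := by
  induction F using Finset.induction_on with
  | empty => simp
  | @insert a F ha ih =>
    have hip : IndepFun (∏ e ∈ F, g e) (g a) μ :=
      hind.indepFun_finsetProd_of_notMem hmeas ha
    have hm : Measurable (fun ω => ∏ e ∈ F, g e ω) :=
      Finset.measurable_prod F (fun e _ => hmeas e)
    have happ : (∏ e ∈ F, g e) = fun ω => ∏ e ∈ F, g e ω := by
      funext ω; simp [Finset.prod_apply]
    rw [happ] at hip
    have := hip.integral_mul_eq_mul_integral hm.aestronglyMeasurable (hmeas a).aestronglyMeasurable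
    calc ∫ ω, ∏ e ∈ Insert.insert a F, g e ω ∂μ
        = ∫ ω, (∏ e ∈ F, g e ω) * g a ω ∂μ := by
          simp_rw [Finset.prod_insert ha, mul_comm]
      _ = (∫ ω, ∏ e ∈ F, g e ω ∂μ) * ∫ ω, g a ω ∂μ := this
      _ = ∏ e ∈ Insert.insert a F, ∫ ω, g e ω ∂μ := by
          rw [ih, Finset.prod_insert ha, mul_comm]

lemma my_exp_lemma (h01 : ∀ e ω, ξ e ω = 0 ∨ ξ e ω = 1)
    (hind : iIndepFun ξ μ)
    (hmeas : ∀ e, Measurable (ξ e)) {k : ℕ} (R : Fin k → Finset E) (c : Fin k → ℝ) :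
    ∫ ω, ∏ j, ((∏ e ∈ R j, ξ e ω) - c j) ∂μ
      = ∑ T ∈ Finset.univ.powerset, (∏ j ∈ Finset.univ \ T, (-(c j))) *
          ∏ e ∈ T.biUnion R, ∫ ω, ξ e ω ∂μ := by
  have hxi01 : ∀ e ω, 0 ≤ ξ e ω ∧ ξ e ω ≤ 1 := by
    intro e ω; rcases h01 e ω with h | h <;> rw [h] <;> norm_num
  have hpt : ∀ ω : Ω, ∏ j, ((∏ e ∈ R j, ξ e ω) - c j)
      = ∑ T ∈ Finset.univ.powerset, (∏ j ∈ Finset.univ \ T, (-(c j))) *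
          ∏ e ∈ T.biUnion R, ξ e ω := by
    intro ω
    have : ∀ j : Fin k, (∏ e ∈ R j, ξ e ω) - c j = (∏ e ∈ R j, ξ e ω) + (-(c j)) := by
      intro j; ring
    simp_rw [this]
    rw [Finset.prod_add]
    refine Finset.sum_congr rfl fun T _ => ?_
    rw [my_prod_biUnion_idem h01 R T ω]
    ring
  simp_rw [hpt]
  rw [integral_finset_sum]
  · refine Finset.sum_congr rfl fun T _ => ?_
    rw [integral_const_mul, my_integral_finset_prod hind hmeas]
  · intro T _
    refine Integrable.const_mul ?_ _
    refine my_integrable_of_bounded (Finset.measurable_prod _ (fun e _ => hmeas e)) 1 ?_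
    intro ω
    rw [abs_of_nonneg (Finset.prod_nonneg fun e _ => (hxi01 e ω).1)]
    exact Finset.prod_le_one (fun e _ => (hxi01 e ω).1) (fun e _ => (hxi01 e ω).2)

end Aux

/-- Bound on the absolute value of the expectation of a product of centered products of
independent Bernoulli variables: singleton-covered indices contribute `π_e`, repeated
indices contribute `π_e (1 + π_e)`. -/
theorem stmt2 {Ω : Type*} [MeasurableSpace Ω] (μ : Measure Ω) [IsProbabilityMeasure μ]
    {E : Type*} [Fintype E] [DecidableEq E]
    (ξ : E → Ω → ℝ) (π : E → ℝ)
    (hind : iIndepFun ξ μ)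
    (hmeas : ∀ e, Measurable (ξ e))
    (h01 : ∀ e ω, ξ e ω = 0 ∨ ξ e ω = 1)
    (hπpos : ∀ e, 0 < π e)
    (hπ : ∀ e, (μ {ω | ξ e ω = 1}).toReal = π e)
    (k : ℕ) (S : Fin k → Finset E) (hS : ∀ j, (S j).Nonempty) :
    |∫ ω, ∏ j, ((∏ e ∈ S j, ξ e ω) - ∫ ω', ∏ e ∈ S j, ξ e ω' ∂μ) ∂μ| ≤
      (∏ e ∈ (Finset.univ.biUnion S).filter
          (fun e => (Finset.univ.filter (fun j => e ∈ S j)).card = 1), π e) *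
        ∏ e ∈ (Finset.univ.biUnion S).filter
          (fun e => (Finset.univ.filter (fun j => e ∈ S j)).card ≠ 1), π e * (1 + π e) := by
  classical
  set U := Finset.univ.biUnion S with hU
  set E1 := U.filter (fun e => (Finset.univ.filter (fun j => e ∈ S j)).card = 1) with hE1
  set E2 := U.filter (fun e => (Finset.univ.filter (fun j => e ∈ S j)).card ≠ 1) with hE2
  set R : Fin k → Finset E := fun j => S j ∩ E2 with hR
  set g : Fin k → Finset E := fun j => S j ∩ E1 with hg
  have hπ0 : ∀ e, 0 ≤ π e := fun e => (hπpos e).le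
  have hπ1 : ∀ e, π e ≤ 1 := by
    intro e; rw [← hπ e]
    calc (μ {ω | ξ e ω = 1}).toReal ≤ (μ Set.univ).toReal :=
          ENNReal.toReal_mono (measure_ne_top μ _) (measure_mono (Set.subset_univ _))
      _ = 1 := by simp
  have hxi01 : ∀ e ω, 0 ≤ ξ e ω ∧ ξ e ω ≤ 1 := by
    intro e ω; rcases h01 e ω with h | h <;> rw [h] <;> norm_num
  -- expectation of each variable
  have hint_e : ∀ e, ∫ ω, ξ e ω ∂μ = π e := by
    intro e
    rw [← hπ e]
    have hs : MeasurableSet (ξ e ⁻¹' {1}) := hmeas e (measurableSet_singleton 1)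
    have heq : ∫ ω, ξ e ω ∂μ = ∫ ω, (ξ e ⁻¹' {1}).indicator (fun _ => (1:ℝ)) ω ∂μ := by
      refine integral_congr_ae (Filter.Eventually.of_forall fun ω => ?_)
      rcases h01 e ω with h | h <;> simp [Set.indicator_apply, Set.mem_preimage, h]
    rw [heq, integral_indicator_const _ hs]
    simp only [smul_eq_mul, mul_one]
    rfl
  have hIξ : ∀ e, Integrable (ξ e) μ := by
    intro e
    refine my_integrable_of_bounded (hmeas e) 1 fun ω => ?_
    rw [abs_of_nonneg (hxi01 e ω).1]; exact (hxi01 e ω).2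
  have hcF : ∀ F : Finset E, (∫ ω, ∏ e ∈ F, ξ e ω ∂μ) = ∏ e ∈ F, π e := by
    intro F
    rw [my_integral_finset_prod hind hmeas]
    exact Finset.prod_congr rfl fun e _ => hint_e e
  -- combinatorial facts
  have hmemU : ∀ {e : E} {j : Fin k}, e ∈ S j → e ∈ U := fun {e j} h =>
    Finset.mem_biUnion.2 ⟨j, Finset.mem_univ j, h⟩
  have hUex : ∀ e ∈ U, ∃ j, e ∈ S j := by
    intro e he
    obtain ⟨j, -, hj⟩ := Finset.mem_biUnion.1 he
    exact ⟨j, hj⟩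
  have hUniq : ∀ e ∈ E1, ∀ {i j : Fin k}, e ∈ S i → e ∈ S j → i = j := by
    intro e he i j hi hj
    have hcard : (Finset.univ.filter (fun j => e ∈ S j)).card = 1 :=
      (Finset.mem_filter.1 he).2
    obtain ⟨a, ha⟩ := Finset.card_eq_one.1 hcard
    have hi' : i ∈ Finset.univ.filter (fun j => e ∈ S j) := by simp [hi]
    have hj' : j ∈ Finset.univ.filter (fun j => e ∈ S j) := by simp [hj]
    rw [ha, Finset.mem_singleton] at hi' hj'
    rw [hi', hj']
  have hdisj12 : Disjoint E1 E2 := by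
    rw [Finset.disjoint_left]
    intro e he1 he2
    exact (Finset.mem_filter.1 he2).2 (Finset.mem_filter.1 he1).2
  have hmem12 : ∀ e ∈ U, e ∈ E1 ∨ e ∈ E2 := by
    intro e he
    by_cases h : (Finset.univ.filter (fun j => e ∈ S j)).card = 1
    · exact Or.inl (Finset.mem_filter.2 ⟨he, h⟩)
    · exact Or.inr (Finset.mem_filter.2 ⟨he, h⟩)
  have hSmem : ∀ (j : Fin k) (e : E), e ∈ S j ↔ e ∈ g j ∨ e ∈ R j := by
    intro j e
    rw [hg, hR]
    simp only [Finset.mem_inter]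
    constructor
    · intro h
      rcases hmem12 e (hmemU h) with h1 | h2
      · exact Or.inl ⟨h, h1⟩
      · exact Or.inr ⟨h, h2⟩
    · rintro (⟨h, -⟩ | ⟨h, -⟩) <;> exact h
  have hdisj_gR : ∀ {i j : Fin k}, Disjoint (g i) (R j) := by
    intro i j
    rw [Finset.disjoint_left]
    intro e hei hej
    exact Finset.disjoint_left.1 hdisj12 (Finset.mem_inter.1 hei).2 (Finset.mem_inter.1 hej).2
  have hp_split : ∀ j, (∏ e ∈ S j, π e) = (∏ e ∈ g j, π e) * ∏ e ∈ R j, π e := by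
    intro j
    rw [← Finset.prod_union hdisj_gR]
    refine Finset.prod_congr ?_ fun _ _ => rfl
    ext e
    rw [Finset.mem_union, hSmem]
  have hgdisj : ∀ (A : Finset (Fin k)),
      ∏ j ∈ A, ∏ e ∈ g j, π e = ∏ e ∈ A.biUnion g, π e := by
    intro A
    refine (Finset.prod_biUnion ?_).symm
    intro i _ j _ hij
    rw [Function.onFun, Finset.disjoint_left]
    intro e hei hej
    rw [hg] at hei hej
    exact hij (hUniq e (Finset.mem_inter.1 hei).2 (Finset.mem_inter.1 hei).1
      (Finset.mem_inter.1 hej).1)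
  have hgE1 : ∀ T : Finset (Fin k),
      (∏ e ∈ (Finset.univ \ T).biUnion g, π e) * ∏ e ∈ T.biUnion g, π e
        = ∏ e ∈ E1, π e := by
    intro T
    have hd : Disjoint ((Finset.univ \ T).biUnion g) (T.biUnion g) := by
      rw [Finset.disjoint_left]
      intro e he1 he2
      obtain ⟨i, hi, hei⟩ := Finset.mem_biUnion.1 he1
      obtain ⟨j, hj, hej⟩ := Finset.mem_biUnion.1 he2
      rw [hg] at hei hej
      have : i = j := hUniq e (Finset.mem_inter.1 hei).2 (Finset.mem_inter.1 hei).1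
        (Finset.mem_inter.1 hej).1
      rw [Finset.mem_sdiff] at hi
      exact hi.2 (this ▸ hj)
    rw [← Finset.prod_union hd]
    refine Finset.prod_congr ?_ fun _ _ => rfl
    ext e
    simp only [Finset.mem_union, Finset.mem_biUnion, Finset.mem_sdiff, Finset.mem_univ,
      true_and]
    constructor
    · rintro (⟨i, -, hei⟩ | ⟨i, -, hei⟩) <;> exact (Finset.mem_inter.1 (hg ▸ hei)).2
    · intro he
      obtain ⟨j, hj⟩ := hUex e (Finset.mem_filter.1 he).1
      have hegj : e ∈ g j := by rw [hg]; exact Finset.mem_inter.2 ⟨hj, he⟩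
      by_cases hT : j ∈ T
      · exact Or.inr ⟨j, hT, hegj⟩
      · exact Or.inl ⟨j, hT, hegj⟩
  have hTS_split : ∀ T : Finset (Fin k),
      ∏ e ∈ T.biUnion S, π e = (∏ e ∈ T.biUnion g, π e) * ∏ e ∈ T.biUnion R, π e := by
    intro T
    have hd : Disjoint (T.biUnion g) (T.biUnion R) := by
      rw [Finset.disjoint_left]
      intro e he1 he2
      obtain ⟨i, -, hei⟩ := Finset.mem_biUnion.1 he1
      obtain ⟨j, -, hej⟩ := Finset.mem_biUnion.1 he2
      exact Finset.disjoint_left.1 hdisj_gR hei hej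
    rw [← Finset.prod_union hd]
    refine Finset.prod_congr ?_ fun _ _ => rfl
    ext e
    simp only [Finset.mem_union, Finset.mem_biUnion]
    constructor
    · rintro ⟨j, hj, hej⟩
      rcases (hSmem j e).1 hej with h | h
      · exact Or.inl ⟨j, hj, h⟩
      · exact Or.inr ⟨j, hj, h⟩
    · rintro (⟨j, hj, hej⟩ | ⟨j, hj, hej⟩) <;>
        exact ⟨j, hj, (hSmem j e).2 (by tauto)⟩
  -- main expansion identity
  have main_eq : ∫ ω, ∏ j, ((∏ e ∈ S j, ξ e ω) - ∏ e ∈ S j, π e) ∂μ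
      = (∏ e ∈ E1, π e) * ∫ ω, ∏ j, ((∏ e ∈ R j, ξ e ω) - ∏ e ∈ R j, π e) ∂μ := by
    rw [my_exp_lemma h01 hind hmeas S (fun j => ∏ e ∈ S j, π e),
        my_exp_lemma h01 hind hmeas R (fun j => ∏ e ∈ R j, π e), Finset.mul_sum]
    refine Finset.sum_congr rfl fun T _ => ?_
    simp only [hint_e]
    have h1 : ∀ j ∈ Finset.univ \ T,
        -(∏ e ∈ S j, π e) = (∏ e ∈ g j, π e) * (-(∏ e ∈ R j, π e)) := by
      intro j _; rw [hp_split j]; ring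
    rw [Finset.prod_congr rfl h1, Finset.prod_mul_distrib, hgdisj, hTS_split]
    have h2 := hgE1 T
    rw [← h2]
    ring
  -- pointwise bound facts
  have hq01 : ∀ F : Finset E, 0 ≤ (∏ e ∈ F, π e) ∧ (∏ e ∈ F, π e) ≤ 1 := fun F =>
    ⟨Finset.prod_nonneg fun e _ => hπ0 e,
     Finset.prod_le_one (fun e _ => hπ0 e) (fun e _ => hπ1 e)⟩
  have hx01 : ∀ (F : Finset E) ω, 0 ≤ (∏ e ∈ F, ξ e ω) ∧ (∏ e ∈ F, ξ e ω) ≤ 1 := fun F ω =>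
    ⟨Finset.prod_nonneg fun e _ => (hxi01 e ω).1,
     Finset.prod_le_one (fun e _ => (hxi01 e ω).1) (fun e _ => (hxi01 e ω).2)⟩
  have hfactor : ∀ (F : Finset E) ω,
      |(∏ e ∈ F, ξ e ω) - ∏ e ∈ F, π e| ≤ ∏ e ∈ F, max (ξ e ω) (π e) := by
    intro F ω
    by_cases h : ∀ e ∈ F, ξ e ω = 1
    · have h1 : (∏ e ∈ F, ξ e ω) = 1 := Finset.prod_eq_one h
      have hm : (∏ e ∈ F, max (ξ e ω) (π e)) = 1 :=
        Finset.prod_eq_one fun e he => by rw [h e he]; exact max_eq_left (hπ1 e)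
      rw [h1, hm, abs_of_nonneg (by linarith [(hq01 F).2])]
      linarith [(hq01 F).1]
    · push_neg at h
      obtain ⟨e, he, hne⟩ := h
      have h0 : ξ e ω = 0 := (h01 e ω).resolve_right hne
      rw [Finset.prod_eq_zero he h0, zero_sub, abs_neg, abs_of_nonneg (hq01 F).1]
      exact Finset.prod_le_prod (fun e _ => hπ0 e) (fun e _ => le_max_right _ _)
  have hn2 : ∀ e ∈ E2, 2 ≤ (Finset.univ.filter (fun j => e ∈ S j)).card := by
    intro e he
    obtain ⟨hU', hne⟩ := Finset.mem_filter.1 he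
    obtain ⟨j, hj⟩ := hUex e hU'
    have hpos : 0 < (Finset.univ.filter (fun j => e ∈ S j)).card :=
      Finset.card_pos.2 ⟨j, by simp [hj]⟩
    omega
  have hswap : ∀ ω, ∏ j, ∏ e ∈ R j, max (ξ e ω) (π e)
      = ∏ e ∈ E2, (max (ξ e ω) (π e)) ^ ((Finset.univ.filter (fun j => e ∈ S j)).card) := by
    intro ω
    have hRfil : ∀ j, R j = E2.filter (fun e => e ∈ S j) := by
      intro j
      rw [hR]
      ext e
      simp only [Finset.mem_inter, Finset.mem_filter]
      tauto
    calc ∏ j, ∏ e ∈ R j, max (ξ e ω) (π e)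
        = ∏ j, ∏ e ∈ E2, if e ∈ S j then max (ξ e ω) (π e) else 1 := by
          refine Finset.prod_congr rfl fun j _ => ?_
          rw [hRfil j, Finset.prod_filter]
      _ = ∏ e ∈ E2, ∏ j, if e ∈ S j then max (ξ e ω) (π e) else 1 := Finset.prod_comm
      _ = ∏ e ∈ E2, (max (ξ e ω) (π e)) ^ ((Finset.univ.filter (fun j => e ∈ S j)).card) := by
          refine Finset.prod_congr rfl fun e _ => ?_
          rw [← Finset.prod_filter, Finset.prod_const]
  have hmax01 : ∀ e ω, 0 ≤ max (ξ e ω) (π e) ∧ max (ξ e ω) (π e) ≤ 1 := fun e ω =>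
    ⟨le_trans (hxi01 e ω).1 (le_max_left _ _), max_le (hxi01 e ω).2 (hπ1 e)⟩
  have ptw : ∀ ω, |∏ j, ((∏ e ∈ R j, ξ e ω) - ∏ e ∈ R j, π e)|
      ≤ ∏ e ∈ E2, (max (ξ e ω) (π e)) ^ 2 := by
    intro ω
    rw [Finset.abs_prod]
    calc ∏ j, |(∏ e ∈ R j, ξ e ω) - ∏ e ∈ R j, π e|
        ≤ ∏ j, ∏ e ∈ R j, max (ξ e ω) (π e) :=
          Finset.prod_le_prod (fun j _ => abs_nonneg _) (fun j _ => hfactor (R j) ω)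
      _ = ∏ e ∈ E2, (max (ξ e ω) (π e)) ^ ((Finset.univ.filter (fun j => e ∈ S j)).card) :=
          hswap ω
      _ ≤ ∏ e ∈ E2, (max (ξ e ω) (π e)) ^ 2 := by
          refine Finset.prod_le_prod (fun e _ => pow_nonneg (hmax01 e ω).1 _) fun e he => ?_
          exact pow_le_pow_of_le_one (hmax01 e ω).1 (hmax01 e ω).2 (hn2 e he)
  -- integrability
  have hf_meas : Measurable (fun ω => ∏ j, ((∏ e ∈ R j, ξ e ω) - ∏ e ∈ R j, π e)) :=
    Finset.measurable_prod _ fun j _ =>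
      (Finset.measurable_prod _ fun e _ => hmeas e).sub measurable_const
  have hIf : Integrable (fun ω => ∏ j, ((∏ e ∈ R j, ξ e ω) - ∏ e ∈ R j, π e)) μ := by
    refine my_integrable_of_bounded hf_meas 1 fun ω => ?_
    rw [Finset.abs_prod]
    refine Finset.prod_le_one (fun j _ => abs_nonneg _) fun j _ => ?_
    rw [abs_le]
    constructor
    · linarith [(hx01 (R j) ω).1, (hq01 (R j)).2]
    · linarith [(hx01 (R j) ω).2, (hq01 (R j)).1]
  have hMmeas : ∀ e, Measurable (fun ω => (max (ξ e ω) (π e)) ^ 2) := fun e =>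
    ((hmeas e).max measurable_const).pow_const 2
  have hIG : Integrable (fun ω => ∏ e ∈ E2, (max (ξ e ω) (π e)) ^ 2) μ := by
    refine my_integrable_of_bounded (Finset.measurable_prod _ fun e _ => hMmeas e) 1 fun ω => ?_
    rw [abs_of_nonneg (Finset.prod_nonneg fun e _ => pow_nonneg (hmax01 e ω).1 _)]
    exact Finset.prod_le_one (fun e _ => pow_nonneg (hmax01 e ω).1 _)
      (fun e _ => pow_le_one₀ (hmax01 e ω).1 (hmax01 e ω).2)
  have Mindep : iIndepFun
      (fun e ω => (max (ξ e ω) (π e)) ^ 2) μ :=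
    hind.comp (fun e x => (max x (π e)) ^ 2)
      (fun _ => (measurable_id.max measurable_const).pow_const 2)
  have hval : ∀ e, ∫ ω, (max (ξ e ω) (π e)) ^ 2 ∂μ = π e ^ 2 + (1 - π e ^ 2) * π e := by
    intro e
    have hfun : ∀ ω, (max (ξ e ω) (π e)) ^ 2 = π e ^ 2 + (1 - π e ^ 2) * ξ e ω := by
      intro ω
      rcases h01 e ω with h | h
      · rw [h, max_eq_right (hπ0 e)]; ring
      · rw [h, max_eq_left (hπ1 e)]; ring
    rw [integral_congr_ae (Filter.Eventually.of_forall hfun)]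
    rw [integral_add (integrable_const _) ((hIξ e).const_mul _), integral_const,
      integral_const_mul, hint_e]
    simp
  have habs : |∫ ω, ∏ j, ((∏ e ∈ R j, ξ e ω) - ∏ e ∈ R j, π e) ∂μ|
      ≤ ∏ e ∈ E2, π e * (1 + π e) := by
    calc |∫ ω, ∏ j, ((∏ e ∈ R j, ξ e ω) - ∏ e ∈ R j, π e) ∂μ|
        = ‖∫ ω, ∏ j, ((∏ e ∈ R j, ξ e ω) - ∏ e ∈ R j, π e) ∂μ‖ := (Real.norm_eq_abs _).symm
      _ ≤ ∫ ω, ‖∏ j, ((∏ e ∈ R j, ξ e ω) - ∏ e ∈ R j, π e)‖ ∂μ :=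
          norm_integral_le_integral_norm _
      _ = ∫ ω, |∏ j, ((∏ e ∈ R j, ξ e ω) - ∏ e ∈ R j, π e)| ∂μ := by
          simp_rw [Real.norm_eq_abs]
      _ ≤ ∫ ω, ∏ e ∈ E2, (max (ξ e ω) (π e)) ^ 2 ∂μ := integral_mono hIf.abs hIG ptw
      _ = ∏ e ∈ E2, ∫ ω, (max (ξ e ω) (π e)) ^ 2 ∂μ :=
          my_integral_finset_prod Mindep hMmeas E2
      _ ≤ ∏ e ∈ E2, π e * (1 + π e) := by
          refine Finset.prod_le_prod (fun e _ => ?_) (fun e _ => ?_)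
          · rw [hval e]; nlinarith [hπ0 e, hπ1 e]
          · rw [hval e]; nlinarith [hπ0 e, hπ1 e]
  -- assemble
  simp only [hcF]
  rw [main_eq, abs_mul, abs_of_nonneg (Finset.prod_nonneg fun e _ => hπ0 e)]
  exact mul_le_mul_of_nonneg_left habs (Finset.prod_nonneg fun e _ => hπ0 e)
end

section
/- Let C ∈ ℝ₊^{n×n} with all row sums |C_{i⋆}|, column sums |C_{⋆j}|, and total sum |C| positive, and let b > 0. Define the single-variable function ℓ(x) = C_{ij} log σ(x) + b (|C_{i⋆}||C_{⋆j}|/|C|) log σ(−x), where σ(x) = 1/(1+e^{−x}) is the sigmoid. If C_{ij} > 0, then ℓ is maximized at the unique point x* = log(C_{ij}|C|/(|C_{i⋆}||C_{⋆j}|)) − log b. -/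
open scoped BigOperators

lemma core_gibbs (a c : ℝ) (ha : 0 < a) (hc : 0 < c) (p : ℝ) (hp0 : 0 < p) (hp1 : p < 1)
    (hne : p ≠ a / (a + c)) :
    a * Real.log p + c * Real.log (1 - p) <
      a * Real.log (a / (a + c)) + c * Real.log (c / (a + c)) := by
  have hac : 0 < a + c := by linarith
  have hq : 0 < 1 - p := by linarith
  have hu1 : p * (a + c) / a ≠ 1 := by
    intro h
    apply hne
    field_simp at h ⊢
    linarith
  have l1 : Real.log (p * (a + c) / a) < p * (a + c) / a - 1 :=
    Real.log_lt_sub_one_of_pos (by positivity) hu1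
  have l2 : Real.log ((1 - p) * (a + c) / c) ≤ (1 - p) * (a + c) / c - 1 :=
    Real.log_le_sub_one_of_pos (by positivity)
  have e1 : Real.log (p * (a + c) / a) = Real.log p - Real.log (a / (a + c)) := by
    rw [Real.log_div (by positivity) ha.ne', Real.log_div ha.ne' hac.ne',
      Real.log_mul hp0.ne' hac.ne']
    ring
  have e2 : Real.log ((1 - p) * (a + c) / c) = Real.log (1 - p) - Real.log (c / (a + c)) := by
    rw [Real.log_div (by positivity) hc.ne', Real.log_div hc.ne' hac.ne',
      Real.log_mul hq.ne' hac.ne']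
    ring
  rw [e1] at l1
  rw [e2] at l2
  have key : a * (p * (a + c) / a - 1) + c * ((1 - p) * (a + c) / c - 1) = 0 := by
    field_simp
    ring
  nlinarith [mul_lt_mul_of_pos_left l1 ha, mul_le_mul_of_nonneg_left l2 hc.le]

lemma sigmoid_compl (x : ℝ) : 1 - 1 / (1 + Real.exp (-x)) = 1 / (1 + Real.exp x) := by
  have h1 : Real.exp (-x) = (Real.exp x)⁻¹ := Real.exp_neg x
  have h2 : Real.exp x ≠ 0 := (Real.exp_pos x).ne'
  have h3 : (0:ℝ) < 1 + Real.exp (-x) := by positivity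
  have h4 : (0:ℝ) < 1 + Real.exp x := by positivity
  rw [h1]
  field_simp
  ring

/-- The SGNS single-entry objective `ℓ(x) = C_ij log σ(x) + b (|C_{i⋆}||C_{⋆j}|/|C|) log σ(-x)`
is uniquely maximized at `x* = log (C_ij |C| / (|C_{i⋆}| |C_{⋆j}|)) - log b`. -/
theorem stmt4 (n : ℕ) (C : Matrix (Fin n) (Fin n) ℝ) (b : ℝ) (hb : 0 < b)
    (hC : ∀ i j, 0 ≤ C i j) (i j : Fin n)
    (hrow : 0 < ∑ j', C i j') (hcol : 0 < ∑ i', C i' j)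
    (htot : 0 < ∑ i', ∑ j', C i' j')
    (hij : 0 < C i j) :
    ∀ x : ℝ,
      x ≠ Real.log (C i j * (∑ i', ∑ j', C i' j') / ((∑ j', C i j') * (∑ i', C i' j)))
            - Real.log b →
      C i j * Real.log (1 / (1 + Real.exp (-x))) +
          b * ((∑ j', C i j') * (∑ i', C i' j) / (∑ i', ∑ j', C i' j')) *
            Real.log (1 / (1 + Real.exp (-(-x)))) <
        C i j * Real.log (1 / (1 + Real.exp
              (-(Real.log (C i j * (∑ i', ∑ j', C i' j') /
                  ((∑ j', C i j') * (∑ i', C i' j))) - Real.log b)))) +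
          b * ((∑ j', C i j') * (∑ i', C i' j) / (∑ i', ∑ j', C i' j')) *
            Real.log (1 / (1 + Real.exp
              (-(-(Real.log (C i j * (∑ i', ∑ j', C i' j') /
                  ((∑ j', C i j') * (∑ i', C i' j))) - Real.log b))))) := by
  intro x hx
  set a := C i j with ha_def
  set R := ∑ j', C i j' with hR
  set S := ∑ i', C i' j with hS
  set T := ∑ i', ∑ j', C i' j' with hT
  set c := b * (R * S / T) with hc_def
  have ha : 0 < a := hij
  have hc : 0 < c := by positivity
  set xs := Real.log (a * T / (R * S)) - Real.log b with hxs
  -- exp xs = a / c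
  have hexp : Real.exp xs = a / c := by
    rw [hxs, Real.exp_sub, Real.exp_log (by positivity), Real.exp_log hb, hc_def]
    field_simp
  have hexpneg : Real.exp (-xs) = c / a := by
    rw [Real.exp_neg, hexp]
    field_simp
  have hac : 0 < a + c := by linarith
  clear hxs hc_def hR hS hT ha_def hrow hcol htot hij hb hC
  clear_value a R S T c xs
  clear R S T b
  -- value at xs
  have hps : 1 / (1 + Real.exp (-xs)) = a / (a + c) := by
    rw [hexpneg]; field_simp
  have hqs : 1 / (1 + Real.exp (-(-xs))) = c / (a + c) := by
    rw [neg_neg, hexp]; field_simp; ring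
  set p := 1 / (1 + Real.exp (-x)) with hp_def
  have hp0 : 0 < p := by positivity
  have hp1 : p < 1 := by
    rw [hp_def]
    rw [div_lt_one (by positivity)]
    linarith [Real.exp_pos (-x)]
  have hq_eq : 1 / (1 + Real.exp (-(-x))) = 1 - p := by
    rw [neg_neg, hp_def, sigmoid_compl]
  have hpne : p ≠ a / (a + c) := by
    intro h
    apply hx
    have h2 : (1:ℝ) / (1 + Real.exp (-x)) = 1 / (1 + Real.exp (-xs)) := by
      rw [← hp_def, h, hps]
    field_simp at h2
    simpa using h2.symm
  calc a * Real.log p + c * Real.log (1 / (1 + Real.exp (-(-x))))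
      = a * Real.log p + c * Real.log (1 - p) := by rw [hq_eq]
    _ < a * Real.log (a / (a + c)) + c * Real.log (c / (a + c)) :=
        core_gibbs a c ha hc p hp0 hp1 hpne
    _ = a * Real.log (1 / (1 + Real.exp (-xs))) +
          c * Real.log (1 / (1 + Real.exp (-(-xs)))) := by rw [hps, hqs]
end

section
/- Let V, V₀ ∈ ℝ^{n×K} each have K distinct rows partitioning [n] into clusters, and suppose V takes value v_r on cluster r with min_{r≠s}‖v_r − v_s‖ ≥ 3δ, while ‖V_{i⋆} − (V₀)_{i⋆}‖ < δ for all i outside a set S. If V₀ also takes constant values on each true cluster with pairwise distances ≥ 3δ between distinct clusters, then every node i ∉ S is assigned by V to the same cluster-value as every other node outside S in its true community; i.e., the clustering induced by V agrees with the true clustering on [n]\S up to a permutation of labels. -/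
open scoped BigOperators

/-- If the estimated row values `V i = v (h i)` have centers separated by at least `3δ`,
the true row values `V₀ i = u (g i)` have centers separated by at least `3δ`, and
`‖V_{i⋆} − (V₀)_{i⋆}‖ < δ` outside a set `S`, then on the complement of `S` the clustering
induced by `V` agrees with the true clustering (up to a permutation of labels):
for `i, j ∉ S`, `h i = h j ↔ g i = g j`. -/
theorem stmt8 (n K : ℕ) (δ : ℝ) (hδ : 0 < δ)
    (V V₀ : Fin n → EuclideanSpace ℝ (Fin K))
    (h g : Fin n → Fin K)
    (v u : Fin K → EuclideanSpace ℝ (Fin K))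
    (hV : ∀ i, V i = v (h i)) (hV₀ : ∀ i, V₀ i = u (g i))
    (hsepv : ∀ r s, r ≠ s → 3 * δ ≤ ‖v r - v s‖)
    (hsepu : ∀ r s, r ≠ s → 3 * δ ≤ ‖u r - u s‖)
    (S : Set (Fin n))
    (hclose : ∀ i, i ∉ S → ‖V i - V₀ i‖ < δ) :
    ∀ i j, i ∉ S → j ∉ S → (h i = h j ↔ g i = g j) := by
  intro i j hi hj
  have ci := hclose i hi
  have cj := hclose j hj
  rw [hV, hV₀] at ci cj
  constructor
  · intro hij
    by_contra hne
    have h3 := hsepu _ _ hne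
    have : ‖u (g i) - u (g j)‖ ≤ ‖v (h i) - u (g i)‖ + ‖v (h j) - u (g j)‖ := by
      have := norm_sub_le (u (g i) - v (h i)) (u (g j) - v (h j))
      rw [norm_sub_rev (v (h i)), norm_sub_rev (v (h j))]
      calc ‖u (g i) - u (g j)‖ = ‖(u (g i) - v (h i)) - (u (g j) - v (h j))‖ := by
            rw [hij]; congr 1; abel
          _ ≤ _ := this
    linarith
  · intro hij
    by_contra hne
    have h3 := hsepv _ _ hne
    have : ‖v (h i) - v (h j)‖ ≤ ‖v (h i) - u (g i)‖ + ‖v (h j) - u (g j)‖ := by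
      calc ‖v (h i) - v (h j)‖ = ‖(v (h i) - u (g i)) - (v (h j) - u (g j))‖ := by
            rw [hij]; congr 1; abel
          _ ≤ _ := norm_sub_le _ _
    linarith
end
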